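/- Let (X,ρ) be a compact metric space, f : X → X continuous, and p ≥ 2. Suppose X₀, …, X_{p−1} ⊆ X form a strict p-horseshoe for f, i.e., they are nonempty, closed, pairwise disjoint, and f(X_i) ⊇ X₀ ∪ … ∪ X_{p−1} for every 0 ≤ i < p. Then there is a nonempty closed f-invariant set Y ⊆ X with f(Y) = Y and a continuous surjection π : Y → Σ_p satisfying π ∘ f = σ ∘ π, where (Σ_p, σ) is the one-sided full shift on p symbols. -/
import Mathlib


open Filter Topology Set

/-- The one-sided full shift map `σ` on `Σ_p = {0,…,p−1}^{ℕ₀}`. -/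
def shiftMap (p : ℕ) : (ℕ → Fin p) → (ℕ → Fin p) := fun x n => x (n + 1)

/-- The metric `d(x,y) = 2^{-min{i : x_i ≠ y_i}}` on `Σ_p`
(`PiNat.dist x y = (1/2) ^ PiNat.firstDiff x y` for `x ≠ y`). -/
noncomputable instance fullShiftMetric (p : ℕ) : MetricSpace (ℕ → Fin p) := PiNat.metricSpace

/-- If `X₀,…,X_{p−1}` form a strict `p`-horseshoe for `f`, then `f` has a subsystem `(Y,f)`
which is a topological extension of the full shift `(Σ_p,σ)`. -/
theorem horseshoe_extension_of_full_shift {X : Type*} [MetricSpace X] [CompactSpace X]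
    (f : X → X) (hf : Continuous f) (p : ℕ) (hp : 2 ≤ p)
    (Xs : Fin p → Set X) (hne : ∀ i, (Xs i).Nonempty) (hcl : ∀ i, IsClosed (Xs i))
    (hdisj : ∀ i j, i ≠ j → Disjoint (Xs i) (Xs j))
    (hcover : ∀ i, (⋃ j, Xs j) ⊆ f '' Xs i) :
    ∃ Y : Set X, Y.Nonempty ∧ IsClosed Y ∧ f '' Y = Y ∧
      ∃ π : Y → (ℕ → Fin p), Continuous π ∧ Function.Surjective π ∧
        ∀ (y : X) (hy : y ∈ Y) (hfy : f y ∈ Y),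
          π ⟨f y, hfy⟩ = shiftMap p (π ⟨y, hy⟩) := by
  classical
  have h0p : (0:ℕ) < p := lt_of_lt_of_le two_pos hp
  set U : Set X := ⋃ j, Xs j with hU
  have hUcl : IsClosed U := isClosed_iUnion_of_finite hcl
  set Y : Set X := {x | ∀ n, f^[n] x ∈ U} with hYdef
  have hfn : ∀ n : ℕ, Continuous (f^[n]) := fun n => hf.iterate n
  have hYeq : Y = ⋂ n, f^[n] ⁻¹' U := by
    ext x; simp [hYdef, mem_iInter]
  have hYcl : IsClosed Y := by
    rw [hYeq]; exact isClosed_iInter fun n => hUcl.preimage (hfn n)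
  -- the coding map
  let code : X → Fin p := fun x => if h : ∃ i, x ∈ Xs i then h.choose else ⟨0, h0p⟩
  have code_eq : ∀ {x : X} {i : Fin p}, x ∈ Xs i → code x = i := by
    intro x i hx
    have h : ∃ i, x ∈ Xs i := ⟨i, hx⟩
    simp only [code, dif_pos h]
    by_contra hne'
    exact (hdisj _ _ hne').ne_of_mem h.choose_spec hx rfl
  -- finite orbit segments exist
  have orbit_fin : ∀ (n : ℕ) (ω : ℕ → Fin p), ∃ x, ∀ k ≤ n, f^[k] x ∈ Xs (ω k) := by
    intro n
    induction n with
    | zero =>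
      intro ω
      obtain ⟨x, hx⟩ := hne (ω 0)
      exact ⟨x, fun k hk => by simp [Nat.le_zero.mp hk, hx]⟩
    | succ n ih =>
      intro ω
      obtain ⟨y, hy⟩ := ih (fun k => ω (k + 1))
      have hyU : y ∈ U := mem_iUnion.2 ⟨ω 1, by simpa using hy 0 (Nat.zero_le _)⟩
      obtain ⟨x, hx, hfx⟩ := hcover (ω 0) hyU
      refine ⟨x, fun k hk => ?_⟩
      cases k with
      | zero => simpa using hx
      | succ j =>
        have hiter : f^[j + 1] x = f^[j] y := by
          rw [Function.iterate_succ_apply, hfx]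
        rw [hiter]
        exact hy j (Nat.succ_le_succ_iff.mp hk)
  -- full orbits exist, by compactness
  have orbit : ∀ ω : ℕ → Fin p, ∃ x, ∀ k, f^[k] x ∈ Xs (ω k) := by
    intro ω
    set F : ℕ → Set X := fun n => ⋂ k, ⋂ _ : k ≤ n, f^[k] ⁻¹' Xs (ω k) with hF
    have hFcl : ∀ n, IsClosed (F n) :=
      fun n => isClosed_iInter fun k => isClosed_iInter fun _ => (hcl _).preimage (hfn k)
    have hFne : ∀ n, (F n).Nonempty := by
      intro n
      obtain ⟨x, hx⟩ := orbit_fin n ω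
      exact ⟨x, by simp only [hF, mem_iInter]; exact fun k hk => hx k hk⟩
    have hFdec : ∀ n, F (n + 1) ⊆ F n := by
      intro n x hx
      simp only [hF, mem_iInter] at hx ⊢
      exact fun k hk => hx k (hk.trans (Nat.le_succ n))
    obtain ⟨x, hx⟩ := IsCompact.nonempty_iInter_of_sequence_nonempty_isCompact_isClosed
      F hFdec hFne ((hFcl 0).isCompact) hFcl
    refine ⟨x, fun k => ?_⟩
    have := mem_iInter.mp hx k
    simp only [hF, mem_iInter] at this
    exact this k le_rfl
  -- Y is nonempty
  have hYne : Y.Nonempty := by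
    obtain ⟨x, hx⟩ := orbit (fun _ => ⟨0, h0p⟩)
    exact ⟨x, fun n => mem_iUnion.2 ⟨_, hx n⟩⟩
  -- f '' Y = Y
  have hfY : f '' Y = Y := by
    apply Subset.antisymm
    · rintro _ ⟨x, hx, rfl⟩
      intro n
      rw [← Function.iterate_succ_apply]
      exact hx (n + 1)
    · intro y hy
      have hyU : y ∈ U := by simpa using hy 0
      obtain ⟨x, hx, hfx⟩ := hcover ⟨0, h0p⟩ hyU
      refine ⟨x, fun n => ?_, hfx⟩
      cases n with
      | zero => exact mem_iUnion.2 ⟨_, hx⟩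
      | succ j =>
        rw [Function.iterate_succ_apply, hfx]
        exact hy j
  -- the factor map
  refine ⟨Y, hYne, hYcl, hfY, fun y => fun n => code (f^[n] (y : X)), ?_, ?_, ?_⟩
  · -- continuity
    apply continuous_pi
    intro n
    have key : ∀ i : Fin p, (fun y : Y => code (f^[n] (y : X))) ⁻¹' {i}
        = {y : Y | f^[n] (y : X) ∈ Xs i} := by
      intro i
      ext y
      simp only [mem_preimage, mem_singleton_iff, mem_setOf_eq]
      constructor
      · intro h
        have hyU : f^[n] (y : X) ∈ U := y.2 n
        obtain ⟨j, hj⟩ := mem_iUnion.mp hyU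
        rw [← h, code_eq hj]; exact hj
      · intro h; exact code_eq h
    have hclosed : ∀ i : Fin p, IsClosed {y : Y | f^[n] (y : X) ∈ Xs i} :=
      fun i => ((hcl i).preimage (hfn n)).preimage continuous_subtype_val
    have hlc : IsLocallyConstant (fun y : Y => code (f^[n] (y : X))) := by
      rw [IsLocallyConstant.iff_isOpen_fiber]
      intro i
      rw [show (fun y : Y => code (f^[n] (y : X))) ⁻¹' {i}
          = {y : Y | f^[n] (y : X) ∈ Xs i} from key i, ← isClosed_compl_iff]
      have hcompl : {y : Y | f^[n] (y : X) ∈ Xs i}ᶜ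
          = ⋃ j, ⋃ _ : j ≠ i, {y : Y | f^[n] (y : X) ∈ Xs j} := by
        ext y
        simp only [mem_compl_iff, mem_setOf_eq, mem_iUnion]
        constructor
        · intro h
          obtain ⟨j, hj⟩ := mem_iUnion.mp (y.2 n)
          exact ⟨j, fun e => h (e ▸ hj), hj⟩
        · rintro ⟨j, hji, hj⟩ hi
          exact (hdisj j i hji).ne_of_mem hj hi rfl
      rw [hcompl]
      exact isClosed_iUnion_of_finite fun j => isClosed_iUnion_of_finite fun _ => hclosed j
    exact hlc.continuous
  · -- surjectivity
    intro ω
    obtain ⟨x, hx⟩ := orbit ω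
    have hxY : x ∈ Y := fun n => mem_iUnion.2 ⟨_, hx n⟩
    exact ⟨⟨x, hxY⟩, funext fun n => code_eq (hx n)⟩
  · -- semiconjugacy
    intro y hy hfy
    funext n
    simp only [shiftMap]
    rw [← Function.iterate_succ_apply]
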